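/- Let n, m ≥ 1, let f̂ : ℝⁿ → ℝ be continuously differentiable, let B be a real m × n matrix of full column rank, let λ > 0, and let 0 < p < 1. Define f(x) = f̂(x) + λ Σ_{i=1}^m |(Bx)_i|^p and f̃(x, μ) = f̂(x) + λ Σ_{i=1}^m s_μ((Bx)_i)^p for μ > 0. Then f̃ satisfies gradient sub-consistency on ℝⁿ: for every x ∈ ℝⁿ and every u ∈ ℝⁿ such that ∇_x f̃(z_k, μ_k) → u for some sequences z_k → x and μ_k → 0⁺, one has u ∈ ∂f(x), the limiting subdifferential of f at x. -/

import Mathlib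

open Filter Topology

/-- The uniform smoothing function of the absolute value:
`s_μ(t) = |t|` if `|t| ≥ μ/2`, and `s_μ(t) = t²/μ + μ/4` if `|t| < μ/2`. -/
noncomputable def sMu (μ t : ℝ) : ℝ := if μ / 2 ≤ |t| then |t| else t ^ 2 / μ + μ / 4

/-- `v` is a regular subgradient of `f` at `x̄`:
`liminf_{x → x̄, x ≠ x̄} (f(x) − f(x̄) − ⟨v, x − x̄⟩)/‖x − x̄‖ ≥ 0`. -/
def IsRegularSubgradient {n : ℕ} (f : EuclideanSpace ℝ (Fin n) → ℝ)
    (x v : EuclideanSpace ℝ (Fin n)) : Prop :=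
  ∀ ε > (0 : ℝ), ∃ δ > (0 : ℝ), ∀ y, y ≠ x → ‖y - x‖ < δ →
    -ε * ‖y - x‖ ≤ f y - f x - (inner ℝ v (y - x) : ℝ)

/-- `v ∈ ∂f(x̄)`: `v` is a limiting subgradient of `f` at `x̄`, i.e. a limit of regular
subgradients `v_k` of `f` at points `x_k → x̄` with `f(x_k) → f(x̄)`. -/
def IsLimitingSubgradient {n : ℕ} (f : EuclideanSpace ℝ (Fin n) → ℝ)
    (x v : EuclideanSpace ℝ (Fin n)) : Prop :=
  ∃ (xk vk : ℕ → EuclideanSpace ℝ (Fin n)),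
    Filter.Tendsto xk Filter.atTop (nhds x) ∧
    Filter.Tendsto (fun k => f (xk k)) Filter.atTop (nhds (f x)) ∧
    (∀ k, IsRegularSubgradient f (xk k) (vk k)) ∧
    Filter.Tendsto vk Filter.atTop (nhds v)

/-! ### Auxiliary lemmas -/

noncomputable def dsMu (μ t : ℝ) : ℝ :=
  2 * t / μ - (2 * max (t - μ / 2) 0 - 2 * max (-t - μ / 2) 0) / μ

lemma hasDerivAt_max_sq (t : ℝ) : HasDerivAt (fun s : ℝ => max s 0 ^ 2) (2 * max t 0) t := by
  rcases lt_trichotomy t 0 with h | h | h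
  · have : HasDerivAt (fun _ : ℝ => (0:ℝ)) 0 t := hasDerivAt_const t 0
    have heq : (fun s : ℝ => max s 0 ^ 2) =ᶠ[𝓝 t] fun _ => (0:ℝ) := by
      filter_upwards [Iio_mem_nhds h] with s hs
      simp [max_eq_right (le_of_lt (Set.mem_Iio.mp hs))]
    have := this.congr_of_eventuallyEq heq
    simpa [max_eq_right h.le] using this
  · subst h
    rw [hasDerivAt_iff_tendsto_slope]
    have hb : ∀ s : ℝ, s ≠ 0 → ‖slope (fun s : ℝ => max s 0 ^ 2) 0 s‖ ≤ ‖s‖ := by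
      intro s hs
      rw [slope_def_field]
      rcases le_or_gt s 0 with h | h
      · simp [max_eq_right h, div_eq_mul_inv]
      · rw [max_eq_left h.le]
        have hq : (s ^ 2 - (0 ⊔ (0:ℝ)) ^ 2) / (s - 0) = s := by
          field_simp
          simp
          ring
        rw [hq]
    have : Tendsto (slope (fun s : ℝ => max s 0 ^ 2) 0) (𝓝[≠] 0) (𝓝 0) := by
      apply squeeze_zero_norm' _ (tendsto_norm_zero.mono_left nhdsWithin_le_nhds)
      filter_upwards [self_mem_nhdsWithin] with s hs using hb s hs
    simpa using this
  · have h2 : HasDerivAt (fun s : ℝ => s ^ 2) (2 * t) t := by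
      simpa using hasDerivAt_pow 2 t
    have heq : (fun s : ℝ => max s 0 ^ 2) =ᶠ[𝓝 t] fun s => s ^ 2 := by
      filter_upwards [Ioi_mem_nhds h] with s hs
      simp [max_eq_left (le_of_lt (Set.mem_Ioi.mp hs))]
    have := h2.congr_of_eventuallyEq heq
    simpa [max_eq_left h.le] using this

lemma sMu_eq (μ t : ℝ) (hμ : 0 < μ) :
    sMu μ t = t ^ 2 / μ + μ / 4 - (max (t - μ / 2) 0 ^ 2 + max (-t - μ / 2) 0 ^ 2) / μ := by
  unfold sMu
  rcases le_or_gt (μ / 2) |t| with h | h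
  · rw [if_pos h]
    rcases abs_cases t with ⟨ht, _⟩ | ⟨ht, _⟩
    · rw [ht] at h
      rw [ht, max_eq_left (by linarith), max_eq_right (by linarith)]
      field_simp
      ring
    · rw [ht] at h
      rw [ht, max_eq_right (by linarith), max_eq_left (by linarith)]
      field_simp
      ring
  · rw [if_neg (not_le.mpr h)]
    rcases abs_lt.mp h with ⟨h1, h2⟩
    rw [max_eq_right (by linarith), max_eq_right (by linarith)]
    simp

lemma hasDerivAt_sMu {μ : ℝ} (hμ : 0 < μ) (t : ℝ) : HasDerivAt (sMu μ) (dsMu μ t) t := by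
  have h1 : HasDerivAt (fun s : ℝ => max (s - μ / 2) 0 ^ 2) (2 * max (t - μ / 2) 0) t := by
    have := (hasDerivAt_max_sq (t - μ / 2)).comp t ((hasDerivAt_id t).sub_const (μ / 2))
    simpa [Function.comp_def] using this
  have h2 : HasDerivAt (fun s : ℝ => max (-s - μ / 2) 0 ^ 2) (-(2 * max (-t - μ / 2) 0)) t := by
    have := (hasDerivAt_max_sq (-t - μ / 2)).comp t (((hasDerivAt_id t).neg).sub_const (μ / 2))
    simpa [mul_comm, Function.comp_def] using this
  have h3 : HasDerivAt (fun s : ℝ => s ^ 2 / μ + μ / 4) (2 * t / μ) t := by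
    have := ((hasDerivAt_pow 2 t).div_const μ).add_const (μ / 4)
    simpa using this
  have h4 := h3.sub (((h1.add h2)).div_const μ)
  have heq : (fun s : ℝ => s ^ 2 / μ + μ / 4 - (max (s - μ / 2) 0 ^ 2 + max (-s - μ / 2) 0 ^ 2) / μ)
      = sMu μ := by
    funext s; rw [sMu_eq μ s hμ]
  have h4' : HasDerivAt (fun s : ℝ => s ^ 2 / μ + μ / 4 - (max (s - μ / 2) 0 ^ 2 + max (-s - μ / 2) 0 ^ 2) / μ)
      (2 * t / μ - (2 * max (t - μ / 2) 0 + -(2 * max (-t - μ / 2) 0)) / μ) t := h4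
  rw [heq] at h4'
  convert h4' using 1
  unfold dsMu; ring

lemma sMu_pos {μ : ℝ} (hμ : 0 < μ) (t : ℝ) : 0 < sMu μ t := by
  unfold sMu
  split_ifs with h
  · calc 0 < μ / 2 := by linarith
    _ ≤ |t| := h
  · positivity

lemma sMu_of_le {μ t : ℝ} (h : μ / 2 ≤ |t|) : sMu μ t = |t| := if_pos h

lemma dsMu_eq_sign {μ t : ℝ} (hμ : 0 < μ) (h : μ / 2 ≤ |t|) : dsMu μ t = Real.sign t := by
  unfold dsMu
  rcases abs_cases t with ⟨ht, _⟩ | ⟨ht, _⟩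
  · rw [ht] at h
    have ht' : 0 < t := by linarith
    rw [max_eq_left (by linarith), max_eq_right (by linarith), Real.sign_of_pos ht']
    field_simp
    ring
  · rw [ht] at h
    have ht' : t < 0 := by linarith
    rw [max_eq_right (by linarith), max_eq_left (by linarith), Real.sign_of_neg ht']
    field_simp
    ring

lemma hasDerivAt_sMu_rpow {μ p : ℝ} (hμ : 0 < μ) (t : ℝ) :
    HasDerivAt (fun s => sMu μ s ^ p) (dsMu μ t * p * sMu μ t ^ (p - 1)) t :=
  (hasDerivAt_sMu hμ t).rpow_const (Or.inl (sMu_pos hμ t).ne')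

lemma my_hasDerivAt_abs_rpow {p a : ℝ} (ha : a ≠ 0) :
    HasDerivAt (fun t : ℝ => |t| ^ p) (p * |a| ^ (p - 1) * Real.sign a) a := by
  rcases ha.lt_or_gt with h | h
  · have h1 : HasDerivAt (fun t : ℝ => (-t) ^ p) (p * (-a) ^ (p - 1) * (-1)) a := by
      have h2 := (Real.hasDerivAt_rpow_const (x := -a) (p := p) (Or.inl (by linarith))).comp a
        ((hasDerivAt_id a).neg)
      simpa [mul_comm, Function.comp_def] using h2
    have heq : (fun t : ℝ => |t| ^ p) =ᶠ[𝓝 a] fun t => (-t) ^ p := by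
      filter_upwards [Iio_mem_nhds h] with s hs
      rw [abs_of_neg (Set.mem_Iio.mp hs)]
    have := h1.congr_of_eventuallyEq heq
    simpa [abs_of_neg h, Real.sign_of_neg h] using this
  · have h1 : HasDerivAt (fun t : ℝ => t ^ p) (p * a ^ (p - 1)) a :=
      Real.hasDerivAt_rpow_const (Or.inl ha)
    have heq : (fun t : ℝ => |t| ^ p) =ᶠ[𝓝 a] fun t => t ^ p := by
      filter_upwards [Ioi_mem_nhds h] with s hs
      rw [abs_of_pos (Set.mem_Ioi.mp hs)]
    have := h1.congr_of_eventuallyEq heq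
    simpa [abs_of_pos h, Real.sign_of_pos h] using this

variable {n m : ℕ}

noncomputable def rvec (B : Matrix (Fin m) (Fin n) ℝ) (i : Fin m) : EuclideanSpace ℝ (Fin n) :=
  (WithLp.equiv 2 (Fin n → ℝ)).symm (fun j => B i j)

lemma mulVec_eq_inner (B : Matrix (Fin m) (Fin n) ℝ) (i : Fin m) (y : EuclideanSpace ℝ (Fin n)) :
    B.mulVec y i = (inner ℝ (rvec B i) y : ℝ) := by
  simp [PiLp.inner_apply, RCLike.inner_apply, Matrix.mulVec, dotProduct, rvec,
    mul_comm]

lemma hasGradientAt_comp_sum (B : Matrix (Fin m) (Fin n) ℝ)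
    (fhat : EuclideanSpace ℝ (Fin n) → ℝ) (hfhat : ContDiff ℝ 1 fhat)
    (lam : ℝ) (N : Finset (Fin m)) (φ : Fin m → ℝ → ℝ) (φ' : Fin m → ℝ)
    (z : EuclideanSpace ℝ (Fin n))
    (h : ∀ i ∈ N, HasDerivAt (φ i) (φ' i) (B.mulVec z i)) :
    HasGradientAt (fun y => fhat y + lam * ∑ i ∈ N, φ i (B.mulVec y i))
      (gradient fhat z + lam • ∑ i ∈ N, φ' i • rvec B i) z := by
  let E := EuclideanSpace ℝ (Fin n)
  have hlin : ∀ i : Fin m, HasFDerivAt (fun y : EuclideanSpace ℝ (Fin n) => B.mulVec y i)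
      (innerSL ℝ (rvec B i)) z := by
    intro i
    have hfun : (fun y : EuclideanSpace ℝ (Fin n) => B.mulVec y i) = fun y => (innerSL ℝ (rvec B i)) y := by
      funext y; simpa using mulVec_eq_inner B i y
    rw [hfun]
    exact (innerSL ℝ (rvec B i)).hasFDerivAt
  have hterm : ∀ i ∈ N, HasFDerivAt (fun y : EuclideanSpace ℝ (Fin n) => φ i (B.mulVec y i))
      (φ' i • innerSL ℝ (rvec B i)) z := by
    intro i hi
    have := (h i hi).comp_hasFDerivAt z (hlin i)
    simpa [Function.comp_def] using this
  have hsum : HasFDerivAt (fun y : EuclideanSpace ℝ (Fin n) => ∑ i ∈ N, φ i (B.mulVec y i))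
      (∑ i ∈ N, φ' i • innerSL ℝ (rvec B i)) z := HasFDerivAt.fun_sum hterm
  have hmul := hsum.const_mul lam
  have hfh : HasFDerivAt fhat (fderiv ℝ fhat z) z :=
    ((hfhat.differentiable one_ne_zero) z).hasFDerivAt
  have htot := hfh.add hmul
  rw [hasGradientAt_iff_hasFDerivAt]
  have key : (InnerProductSpace.toDual ℝ E)
      (gradient fhat z + lam • ∑ i ∈ N, φ' i • rvec B i)
      = fderiv ℝ fhat z + lam • ∑ i ∈ N, φ' i • innerSL ℝ (rvec B i) := by
    ext y
    simp only [ContinuousLinearMap.add_apply, ContinuousLinearMap.smul_apply,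
      ContinuousLinearMap.coe_sum', Finset.sum_apply, innerSL_apply_apply,
      InnerProductSpace.toDual_apply_apply, inner_add_left, real_inner_smul_left,
      sum_inner, gradient, smul_eq_mul]
    rw [InnerProductSpace.toDual_symm_apply]
  rw [key]
  exact htot

lemma key_ineq {p : ℝ} (hp0 : 0 < p) (hp1 : p < 1) {C t c : ℝ} (hC : 0 ≤ C)
    (hc : |c| ≤ C) (ht : |t| ≤ (C + 1) ^ ((p - 1)⁻¹)) : c * t ≤ |t| ^ p := by
  rcases eq_or_ne t 0 with rfl | htne
  · simp [Real.zero_rpow hp0.ne']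
  · have ht0 : 0 < |t| := abs_pos.mpr htne
    have hκ : ((C + 1) ^ ((p - 1)⁻¹) : ℝ) ^ (p - 1) = C + 1 :=
      Real.rpow_inv_rpow (by linarith) (by intro h; linarith [sub_eq_zero.mp h])
    have h1 : ((C + 1) ^ ((p - 1)⁻¹) : ℝ) ^ (p - 1) ≤ |t| ^ (p - 1) :=
      Real.rpow_le_rpow_of_nonpos ht0 ht (by linarith)
    have h2 : (C + 1) * |t| ≤ |t| ^ (p - 1) * |t| := by
      rw [← hκ]; exact mul_le_mul_of_nonneg_right h1 (abs_nonneg t)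
    have h3 : |t| ^ (p - 1) * |t| = |t| ^ p := by
      rw [Real.rpow_sub ht0, Real.rpow_one, div_mul_cancel₀ _ ht0.ne']
    calc c * t ≤ |c * t| := le_abs_self _
      _ = |c| * |t| := abs_mul c t
      _ ≤ (C + 1) * |t| := by
          apply mul_le_mul_of_nonneg_right (by linarith) (abs_nonneg t)
      _ ≤ |t| ^ (p - 1) * |t| := h2
      _ = |t| ^ p := h3

lemma sign_stable {t a : ℝ} (ha : a ≠ 0) (h : |t - a| < |a| / 2) :
    Real.sign t = Real.sign a ∧ |a| / 2 ≤ |t| := by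
  rcases ha.lt_or_gt with h' | h'
  · have h1 : |a| = -a := abs_of_neg h'
    rw [h1] at h
    have h3 : t < 0 := by rcases abs_lt.mp h with ⟨hl, hr⟩; linarith
    constructor
    · rw [Real.sign_of_neg h3, Real.sign_of_neg h']
    · rw [h1, abs_of_neg h3]; rcases abs_lt.mp h with ⟨hl, hr⟩; linarith
  · have h1 : |a| = a := abs_of_pos h'
    rw [h1] at h
    have h3 : 0 < t := by rcases abs_lt.mp h with ⟨hl, hr⟩; linarith
    constructor
    · rw [Real.sign_of_pos h3, Real.sign_of_pos h']
    · rw [h1, abs_of_pos h3]; rcases abs_lt.mp h with ⟨hl, hr⟩; linarith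

set_option maxHeartbeats 1000000 in
theorem gradient_subconsistency_lp (n m : ℕ) (hn : 1 ≤ n) (hm : 1 ≤ m)
    (fhat : EuclideanSpace ℝ (Fin n) → ℝ) (hfhat : ContDiff ℝ 1 fhat)
    (B : Matrix (Fin m) (Fin n) ℝ) (hB : Function.Injective B.mulVec)
    (lam : ℝ) (hlam : 0 < lam) (p : ℝ) (hp0 : 0 < p) (hp1 : p < 1) :
    ∀ (x u : EuclideanSpace ℝ (Fin n)),
      (∃ (z : ℕ → EuclideanSpace ℝ (Fin n)) (μ : ℕ → ℝ),
        Filter.Tendsto z Filter.atTop (nhds x) ∧ (∀ k, 0 < μ k) ∧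
        Filter.Tendsto μ Filter.atTop (nhds 0) ∧
        Filter.Tendsto (fun k => gradient
            (fun y => fhat y + lam * ∑ i, sMu (μ k) (B.mulVec y i) ^ p) (z k))
          Filter.atTop (nhds u)) →
      IsLimitingSubgradient
        (fun y => fhat y + lam * ∑ i, |B.mulVec y i| ^ p) x u := by
  classical
  rintro x u ⟨z, μ, hz, hμpos, hμ0, hgrad⟩
  -- the smoothed gradients
  set d : ℕ → Fin m → ℝ := fun k i =>
    dsMu (μ k) (B.mulVec (z k) i) * p * sMu (μ k) (B.mulVec (z k) i) ^ (p - 1) with hd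
  have hgr : ∀ k, gradient
      (fun y => fhat y + lam * ∑ i, sMu (μ k) (B.mulVec y i) ^ p) (z k)
      = gradient fhat (z k) + lam • ∑ i, d k i • rvec B i := fun k =>
    (hasGradientAt_comp_sum B fhat hfhat lam Finset.univ
      (fun _ t => sMu (μ k) t ^ p) (d k) (z k)
      (fun i _ => hasDerivAt_sMu_rpow (hμpos k) _)).gradient
  have hu : Tendsto (fun k => gradient fhat (z k) + lam • ∑ i, d k i • rvec B i)
      atTop (𝓝 u) := hgrad.congr hgr
  -- continuity of the gradient of fhat
  have hgc : Tendsto (fun k => gradient fhat (z k)) atTop (𝓝 (gradient fhat x)) := by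
    have hcont : Continuous (fun y : EuclideanSpace ℝ (Fin n) => gradient fhat y) := by
      simp only [gradient]
      exact (LinearIsometryEquiv.continuous _).comp (hfhat.continuous_fderiv one_ne_zero)
    exact (hcont.tendsto x).comp hz
  set w : EuclideanSpace ℝ (Fin n) := lam⁻¹ • (u - gradient fhat x) with hw
  have hS : Tendsto (fun k => ∑ i, d k i • rvec B i) atTop (𝓝 w) := by
    have h1 : Tendsto (fun k => lam • ∑ i, d k i • rvec B i) atTop
        (𝓝 (u - gradient fhat x)) := by
      have := hu.sub hgc
      refine this.congr fun k => ?_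
      abel
    have h2 := h1.const_smul lam⁻¹
    refine h2.congr fun k => ?_
    rw [smul_smul, inv_mul_cancel₀ hlam.ne', one_smul]
  set a : Fin m → ℝ := fun i => B.mulVec x i with ha
  set Zs : Finset (Fin m) := Finset.univ.filter (fun i => a i = 0) with hZs
  have hmemZs : ∀ i, i ∈ Zs ↔ a i = 0 := by
    intro i; simp [hZs]
  set cN : Fin m → ℝ := fun i => Real.sign (a i) * p * |a i| ^ (p - 1) with hcN
  -- convergence of the coefficients on the nonzero components
  have hconvN : ∀ i, i ∉ Zs → Tendsto (fun k => d k i) atTop (𝓝 (cN i)) := by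
    intro i hi
    have hai : a i ≠ 0 := fun h => hi ((hmemZs i).mpr h)
    have hti : Tendsto (fun k => B.mulVec (z k) i) atTop (𝓝 (a i)) := by
      have hcont : Continuous (fun y : EuclideanSpace ℝ (Fin n) => B.mulVec y i) := by
        have hfun : (fun y : EuclideanSpace ℝ (Fin n) => B.mulVec y i) = fun y => (innerSL ℝ (rvec B i)) y := by
          funext y; simpa using mulVec_eq_inner B i y
        rw [hfun]; exact (innerSL ℝ (rvec B i)).continuous
      exact (hcont.tendsto x).comp hz
    have hev1 : ∀ᶠ k in atTop, |B.mulVec (z k) i - a i| < |a i| / 2 := by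
      have := hti (Metric.ball_mem_nhds (a i) (ε := |a i| / 2) (by positivity))
      simpa [Real.dist_eq] using this
    have hev2 : ∀ᶠ k in atTop, μ k < |a i| := by
      have := hμ0 (Iio_mem_nhds (show (0:ℝ) < |a i| by positivity))
      simpa using this
    have heq : (fun k => d k i) =ᶠ[atTop]
        fun k => Real.sign (a i) * p * |B.mulVec (z k) i| ^ (p - 1) := by
      filter_upwards [hev1, hev2] with k h1 h2
      obtain ⟨hsgn, habs⟩ := sign_stable hai h1
      have hle : μ k / 2 ≤ |B.mulVec (z k) i| := le_trans (by linarith) habs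
      simp only [hd]
      rw [dsMu_eq_sign (hμpos k) hle, sMu_of_le hle, hsgn]
    have hlim : Tendsto (fun k => Real.sign (a i) * p * |B.mulVec (z k) i| ^ (p - 1))
        atTop (𝓝 (cN i)) := by
      have h1 : Tendsto (fun k => |B.mulVec (z k) i| ^ (p - 1)) atTop (𝓝 (|a i| ^ (p - 1))) :=
        (hti.abs).rpow_const (Or.inl (abs_ne_zero.mpr hai))
      exact h1.const_mul (Real.sign (a i) * p)
    exact (Tendsto.congr' heq.symm hlim)
  -- splitting the sum; the Zs part converges to a point of a closed span
  have hcompl : Tendsto (fun k => ∑ i ∈ Zsᶜ, d k i • rvec B i) atTop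
      (𝓝 (∑ i ∈ Zsᶜ, cN i • rvec B i)) := by
    refine tendsto_finset_sum _ fun i hi => ?_
    exact (hconvN i (Finset.mem_compl.mp hi)).smul_const _
  have hZsT : Tendsto (fun k => ∑ i ∈ Zs, d k i • rvec B i) atTop
      (𝓝 (w - ∑ i ∈ Zsᶜ, cN i • rvec B i)) := by
    have := hS.sub hcompl
    refine this.congr fun k => ?_
    rw [← Finset.sum_add_sum_compl Zs (fun i => d k i • rvec B i)]
    abel
  set Sp : Submodule ℝ (EuclideanSpace ℝ (Fin n)) := Submodule.span ℝ (Set.range (fun i : {i // i ∈ Zs} => rvec B i.1))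
    with hSp
  have hmem : ∀ k, ∑ i ∈ Zs, d k i • rvec B i ∈ Sp := fun k =>
    Submodule.sum_mem _ fun i hi =>
      Submodule.smul_mem _ _ (Submodule.subset_span ⟨⟨i, hi⟩, rfl⟩)
  have hclosed : IsClosed (Sp : Set (EuclideanSpace ℝ (Fin n))) := Sp.closed_of_finiteDimensional
  have hw0 : w - ∑ i ∈ Zsᶜ, cN i • rvec B i ∈ Sp :=
    hclosed.mem_of_tendsto hZsT (Eventually.of_forall hmem)
  obtain ⟨cz, hcz⟩ := (Submodule.mem_span_range_iff_exists_fun ℝ).1 hw0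
  set cfull : Fin m → ℝ := fun i => if h : i ∈ Zs then cz ⟨i, h⟩ else cN i with hcfull
  have h1 : ∑ i ∈ Zs, cfull i • rvec B i = w - ∑ i ∈ Zsᶜ, cN i • rvec B i := by
    rw [← hcz, ← Finset.sum_coe_sort Zs (fun i => cfull i • rvec B i)]
    refine Finset.sum_congr rfl fun i _ => ?_
    simp [hcfull, dif_pos i.2]
  have h2 : ∑ i ∈ Zsᶜ, cfull i • rvec B i = ∑ i ∈ Zsᶜ, cN i • rvec B i :=
    Finset.sum_congr rfl fun i hi => by
      simp [hcfull, dif_neg (Finset.mem_compl.mp hi)]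
  have hwsum : ∑ i, cfull i • rvec B i = w := by
    rw [← Finset.sum_add_sum_compl Zs (fun i => cfull i • rvec B i), h1, h2]
    abel
  have hu_eq : u = gradient fhat x + lam • ∑ i, cfull i • rvec B i := by
    rw [hwsum, hw, smul_smul, mul_inv_cancel₀ hlam.ne', one_smul]
    abel
  -- the differentiable part g and its gradient G
  set g : EuclideanSpace ℝ (Fin n) → ℝ := fun y => fhat y + lam * ∑ i ∈ Zsᶜ, |B.mulVec y i| ^ p with hg
  set G : EuclideanSpace ℝ (Fin n) := gradient fhat x + lam • ∑ i ∈ Zsᶜ, cfull i • rvec B i with hG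
  have hgG : HasGradientAt g G x := by
    refine hasGradientAt_comp_sum B fhat hfhat lam Zsᶜ (fun _ t => |t| ^ p) cfull x
      (fun i hi => ?_)
    have hai : a i ≠ 0 := fun h => (Finset.mem_compl.mp hi) ((hmemZs i).mpr h)
    have := my_hasDerivAt_abs_rpow (p := p) hai
    have hcf : cfull i = p * |a i| ^ (p - 1) * Real.sign (a i) := by
      rw [hcfull]; simp only [dif_neg (Finset.mem_compl.mp hi), hcN]; ring
    rw [hcf]
    exact this
  -- u is a regular subgradient of f at x
  have hreg : IsRegularSubgradient (fun y => fhat y + lam * ∑ i, |B.mulVec y i| ^ p) x u := by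
    intro ε hε
    -- δ₁ from the little-o of g
    have hlittle := hgG.hasFDerivAt.isLittleO
    have hev := hlittle.def hε
    rw [Metric.eventually_nhds_iff] at hev
    obtain ⟨δ₁, hδ₁, hδ₁p⟩ := hev
    set C : ℝ := ∑ i, |cfull i| with hC
    have hC0 : 0 ≤ C := Finset.sum_nonneg fun i _ => abs_nonneg _
    set R : ℝ := ∑ i, ‖rvec B i‖ with hR
    have hR0 : 0 ≤ R := Finset.sum_nonneg fun i _ => norm_nonneg _
    set κ : ℝ := (C + 1) ^ ((p - 1)⁻¹) with hκ
    have hκ0 : 0 < κ := Real.rpow_pos_of_pos (by linarith) _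
    refine ⟨min δ₁ (κ / (R + 1)), lt_min hδ₁ (by positivity), fun y hy hyd => ?_⟩
    have hyd1 : ‖y - x‖ < δ₁ := lt_of_lt_of_le hyd (min_le_left _ _)
    have hyd2 : ‖y - x‖ < κ / (R + 1) := lt_of_lt_of_le hyd (min_le_right _ _)
    -- estimate for the g-part
    have hgpart : -ε * ‖y - x‖ ≤ g y - g x - (inner ℝ G (y - x) : ℝ) := by
      have := hδ₁p (show dist y x < δ₁ by rwa [dist_eq_norm])
      have h2 : ‖g y - g x - (inner ℝ G (y - x) : ℝ)‖ ≤ ε * ‖y - x‖ := by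
        have h3 : (InnerProductSpace.toDual ℝ (EuclideanSpace ℝ (Fin n)) G) (y - x) = (inner ℝ G (y - x) : ℝ) :=
          InnerProductSpace.toDual_apply_apply
        calc ‖g y - g x - (inner ℝ G (y - x) : ℝ)‖
            = ‖g y - g x - (InnerProductSpace.toDual ℝ (EuclideanSpace ℝ (Fin n)) G) (y - x)‖ := by rw [h3]
          _ ≤ ε * ‖y - x‖ := this
      have := neg_abs_le (g y - g x - (inner ℝ G (y - x) : ℝ))
      rw [← Real.norm_eq_abs] at this
      nlinarith [norm_nonneg (y - x)]
    -- nonnegativity of the Zs-part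
    have hZpart : ∀ i ∈ Zs, 0 ≤ |(inner ℝ (rvec B i) (y - x) : ℝ)| ^ p
        - cfull i * (inner ℝ (rvec B i) (y - x) : ℝ) := by
      intro i hi
      set t : ℝ := (inner ℝ (rvec B i) (y - x) : ℝ) with htdef
      have hcle : |cfull i| ≤ C :=
        Finset.single_le_sum (fun j _ => abs_nonneg (cfull j)) (Finset.mem_univ i)
      have hrle : ‖rvec B i‖ ≤ R :=
        Finset.single_le_sum (fun j _ => norm_nonneg (rvec B j)) (Finset.mem_univ i)
      have htle : |t| ≤ κ := by
        have h1 : |t| ≤ ‖rvec B i‖ * ‖y - x‖ := abs_real_inner_le_norm _ _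
        have h2 : ‖rvec B i‖ * ‖y - x‖ ≤ R * (κ / (R + 1)) := by
          apply mul_le_mul hrle hyd2.le (norm_nonneg _) hR0
        have h3 : R * (κ / (R + 1)) ≤ κ := by
          rw [mul_div_assoc']
          rw [div_le_iff₀ (by linarith)]
          nlinarith
        linarith
      linarith [key_ineq hp0 hp1 hC0 hcle htle (c := cfull i) (t := t)]
    -- the decomposition identity
    have hid : (fhat y + lam * ∑ i, |B.mulVec y i| ^ p)
        - (fhat x + lam * ∑ i, |B.mulVec x i| ^ p) - (inner ℝ u (y - x) : ℝ)
        = (g y - g x - (inner ℝ G (y - x) : ℝ))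
          + lam * ∑ i ∈ Zs, (|(inner ℝ (rvec B i) (y - x) : ℝ)| ^ p
              - cfull i * (inner ℝ (rvec B i) (y - x) : ℝ)) := by
      have hzero : ∀ i ∈ Zs, (inner ℝ (rvec B i) x : ℝ) = 0 := by
        intro i hi
        rw [← mulVec_eq_inner]
        exact (hmemZs i).mp hi
      have hyi : ∀ i ∈ Zs, B.mulVec y i = (inner ℝ (rvec B i) (y - x) : ℝ) := by
        intro i hi
        rw [inner_sub_right, hzero i hi, sub_zero, ← mulVec_eq_inner]
      have hxi : ∀ i ∈ Zs, B.mulVec x i = 0 := fun i hi => (hmemZs i).mp hi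
      have hsy : (∑ i, |B.mulVec y i| ^ p)
          = (∑ i ∈ Zs, |(inner ℝ (rvec B i) (y - x) : ℝ)| ^ p)
            + ∑ i ∈ Zsᶜ, |B.mulVec y i| ^ p := by
        rw [← Finset.sum_add_sum_compl Zs (fun i => |B.mulVec y i| ^ p)]
        congr 1
        exact Finset.sum_congr rfl fun i hi => by rw [hyi i hi]
      have hsx : (∑ i, |B.mulVec x i| ^ p) = ∑ i ∈ Zsᶜ, |B.mulVec x i| ^ p := by
        rw [← Finset.sum_add_sum_compl Zs (fun i => |B.mulVec x i| ^ p)]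
        have : ∑ i ∈ Zs, |B.mulVec x i| ^ p = 0 := by
          refine Finset.sum_eq_zero fun i hi => ?_
          rw [hxi i hi]
          simp [Real.zero_rpow hp0.ne']
        rw [this, zero_add]
      have hinner_u : (inner ℝ u (y - x) : ℝ) = (inner ℝ G (y - x) : ℝ)
          + lam * ∑ i ∈ Zs, cfull i * (inner ℝ (rvec B i) (y - x) : ℝ) := by
        have husplit : u = G + lam • ∑ i ∈ Zs, cfull i • rvec B i := by
          rw [hu_eq, hG, ← Finset.sum_add_sum_compl Zs (fun i => cfull i • rvec B i),
            smul_add]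
          abel
        rw [husplit, inner_add_left, real_inner_smul_left, sum_inner]
        congr 2
        exact Finset.sum_congr rfl fun i _ => real_inner_smul_left _ _ _
      rw [hsy, hsx, hinner_u, hg]
      simp only [Finset.sum_sub_distrib]
      ring
    rw [hid]
    have hsum_nonneg : 0 ≤ lam * ∑ i ∈ Zs, (|(inner ℝ (rvec B i) (y - x) : ℝ)| ^ p
        - cfull i * (inner ℝ (rvec B i) (y - x) : ℝ)) :=
      mul_nonneg hlam.le (Finset.sum_nonneg hZpart)
    linarith
  exact ⟨fun _ => x, fun _ => u, tendsto_const_nhds, tendsto_const_nhds,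
    fun _ => hreg, tendsto_const_nhds⟩
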